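/- A positive real number λ is a weak Perron number if and only if some positive integer power λ^n of λ is a Perron number. Moreover, if λ is a weak Perron number, every Galois conjugate of λ of absolute value equal to λ is of the form λ times a root of unity. -/

import Mathlib

set_option maxHeartbeats 1000000


open Set Filter Topology

/-- `z ∈ ℂ` is a Galois conjugate of the real algebraic number `x`:
it is a root of the minimal polynomial of `x` over `ℚ`. -/
def IsGaloisConj (x : ℝ) (z : ℂ) : Prop := Polynomial.aeval z (minpoly ℚ x) = 0

/-- A weak Perron number: a positive real algebraic integer which is at least as large as
the absolute value of each of its Galois conjugates. -/
def IsWeakPerron (l : ℝ) : Prop :=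
  0 < l ∧ IsIntegral ℤ l ∧ ∀ z : ℂ, IsGaloisConj l z → ‖z‖ ≤ l

/-- A Perron number: a positive real algebraic integer strictly larger than the absolute
value of each of its other Galois conjugates. -/
def IsPerron (l : ℝ) : Prop :=
  0 < l ∧ IsIntegral ℤ l ∧ ∀ z : ℂ, IsGaloisConj l z → z ≠ (l : ℂ) → ‖z‖ < l

open Polynomial IntermediateField in
lemma exists_algEquiv_apply_eq {F L : Type*} [Field F] [Field L] [Algebra F L]
    [Normal F L] [FiniteDimensional F L] (x y : L)
    (hy : Polynomial.aeval y (minpoly F x) = 0) :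
    ∃ g : L ≃ₐ[F] L, g x = y := by
  have hx : IsIntegral F x := IsIntegral.of_finite F x
  have hmem : y ∈ (minpoly F x).aroots L := by
    rw [Polynomial.mem_aroots]; exact ⟨minpoly.ne_zero hx, hy⟩
  set φ := (IntermediateField.algHomAdjoinIntegralEquiv F hx).symm ⟨y, hmem⟩ with hφ
  have hgen : φ (IntermediateField.AdjoinSimple.gen F x) = y :=
    IntermediateField.algHomAdjoinIntegralEquiv_symm_apply_gen F hx _
  let ψ := φ.liftNormal L
  refine ⟨AlgEquiv.ofBijective ψ ψ.bijective, ?_⟩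
  have := AlgHom.liftNormal_commutes φ L (IntermediateField.AdjoinSimple.gen F x)
  simpa [IntermediateField.AdjoinSimple.algebraMap_gen, hgen] using this

open Polynomial IntermediateField in
lemma exists_conj_algEquiv (K : IntermediateField ℚ ℂ) [Normal ℚ K] :
    ∃ c : K ≃ₐ[ℚ] K, ∀ y : K, ((c y : K) : ℂ) = starRingEnd ℂ (y : ℂ) := by
  let σ : ℂ →ₐ[ℚ] ℂ := (starRingEnd ℂ).toRatAlgHom
  refine ⟨σ.restrictNormal' K, fun y => ?_⟩
  have h := AlgHom.restrictNormal_commutes σ K y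
  have h2 : (σ.restrictNormal' K) y = σ.restrictNormal K y := rfl
  rw [h2]
  exact h

open Polynomial IntermediateField in
lemma weakPerron_main (lam : ℝ) (hW : IsWeakPerron lam) :
    ∃ k : ℕ, 0 < k ∧
      (∀ z : ℂ, IsGaloisConj lam z → ‖z‖ = lam → z ^ k = ((lam : ℝ) : ℂ) ^ k) ∧
      IsPerron (lam ^ k) := by
  classical
  obtain ⟨hpos, hint, hconj⟩ := hW
  have hintQ : IsIntegral ℚ lam := hint.tower_top
  set p := minpoly ℚ lam with hpdef
  have hp0 : p ≠ 0 := minpoly.ne_zero hintQ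
  have hmonic : p.Monic := minpoly.monic hintQ
  have hirr : Irreducible p := minpoly.irreducible hintQ
  have hminC : minpoly ℚ ((lam : ℝ) : ℂ) = p := by
    have : ((lam : ℝ) : ℂ) = algebraMap ℝ ℂ lam := rfl
    rw [this, minpoly.algebraMap_eq (algebraMap ℝ ℂ).injective]
  have hxroot : aeval ((lam : ℝ) : ℂ) p = 0 := by
    rw [← hminC]; exact minpoly.aeval ℚ _
  have hsplits : (p.map (algebraMap ℚ ℂ)).Splits := IsAlgClosed.splits _
  set K : IntermediateField ℚ ℂ := IntermediateField.adjoin ℚ (p.rootSet ℂ) with hKdef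
  haveI hsf : p.IsSplittingField ℚ K := adjoin_rootSet_isSplittingField hsplits
  haveI : FiniteDimensional ℚ K := IsSplittingField.finiteDimensional K p
  haveI : Normal ℚ K := Normal.of_isSplittingField p
  have hxmem : ((lam : ℝ) : ℂ) ∈ K :=
    IntermediateField.subset_adjoin ℚ _ (by rw [mem_rootSet]; exact ⟨hp0, hxroot⟩)
  set xK : K := ⟨((lam : ℝ) : ℂ), hxmem⟩ with hxKdef
  -- aeval on K vs ℂ
  have haevalK : ∀ (w : K) (q : ℚ[X]), ((aeval w q : K) : ℂ) = aeval ((w : K) : ℂ) q := by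
    intro w q
    exact (Polynomial.aeval_algHom_apply K.val w q).symm
  have hminK : ∀ w : K, aeval ((w : K) : ℂ) p = 0 → minpoly ℚ w = p := by
    intro w hw
    have h1 : aeval w p = 0 := by
      apply Subtype.coe_injective
      show ((aeval w p : K) : ℂ) = ((0 : K) : ℂ)
      rw [haevalK, ZeroMemClass.coe_zero]
      exact hw
    exact (minpoly.eq_of_irreducible_of_monic hirr h1 hmonic).symm
  have hminxK : minpoly ℚ xK = p := hminK xK hxroot
  have hxK_root : aeval xK p = 0 := by
    apply Subtype.coe_injective
    show ((aeval xK p : K) : ℂ) = ((0 : K) : ℂ)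
    rw [haevalK, ZeroMemClass.coe_zero]
    exact hxroot
  have himg_root : ∀ g : K ≃ₐ[ℚ] K, aeval (((g xK : K)) : ℂ) p = 0 := by
    intro g
    have h1 : aeval (g xK) p = 0 := by
      have h2 := Polynomial.aeval_algHom_apply (g : K →ₐ[ℚ] K) xK p
      show aeval ((g : K →ₐ[ℚ] K) xK) p = 0
      rw [h2, hxK_root, map_zero]
    rw [← haevalK, h1, ZeroMemClass.coe_zero]
  have habs : ∀ g : K ≃ₐ[ℚ] K, ‖((g xK : K) : ℂ)‖ ≤ lam := by
    intro g
    exact hconj _ (himg_root g)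
  obtain ⟨c, hc⟩ := exists_conj_algEquiv K
  set Hf : Finset (K ≃ₐ[ℚ] K) :=
    Finset.univ.filter (fun g => ‖((g xK : K) : ℂ)‖ = lam) with hHfdef
  have hmemHf : ∀ g, g ∈ Hf ↔ ‖((g xK : K) : ℂ)‖ = lam := by
    intro g; simp [hHfdef]
  have habs_xK : ‖((xK : K) : ℂ)‖ = lam := by
    rw [hxKdef]; simp [abs_of_pos hpos]
  have hone : (1 : K ≃ₐ[ℚ] K) ∈ Hf := by
    rw [hmemHf]; simpa using habs_xK
  have hcHf : c ∈ Hf := by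
    rw [hmemHf, hc]
    simpa using habs_xK
  -- key identity
  have hkey : ∀ h ∈ Hf, (h xK) * c (h xK) = xK ^ 2 := by
    intro h hh
    apply Subtype.coe_injective
    push_cast
    rw [hc, Complex.mul_conj, Complex.normSq_eq_norm_sq, (hmemHf h).mp hh]
    push_cast
    ring
  have hmul : ∀ g ∈ Hf, ∀ h ∈ Hf, g * h ∈ Hf := by
    intro g hg h hh
    have h2 := congrArg g (hkey h hh)
    rw [map_mul, map_pow] at h2
    have h2' : ((g (h xK) : K) : ℂ) * ((g (c (h xK)) : K) : ℂ) = ((g xK : K) : ℂ) ^ 2 := by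
      have := Subtype.ext_iff.mp h2
      push_cast at this
      exact this
    have h3 : ‖((g (h xK) : K) : ℂ)‖ * ‖((g (c (h xK)) : K) : ℂ)‖
        = ‖((g xK : K) : ℂ)‖ ^ 2 := by
      rw [← norm_mul, ← norm_pow, h2']
    have ha : ‖((g (h xK) : K) : ℂ)‖ ≤ lam := by
      have := habs (g * h); rwa [AlgEquiv.mul_apply] at this
    have hb : ‖((g (c (h xK)) : K) : ℂ)‖ ≤ lam := by
      have := habs (g * (c * h))
      rwa [AlgEquiv.mul_apply, AlgEquiv.mul_apply] at this
    have hc' : ‖((g xK : K) : ℂ)‖ = lam := (hmemHf g).mp hg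
    rw [hc'] at h3
    have ha0 : 0 ≤ ‖((g (h xK) : K) : ℂ)‖ := norm_nonneg _
    have hb0 : 0 ≤ ‖((g (c (h xK)) : K) : ℂ)‖ := norm_nonneg _
    rw [hmemHf, AlgEquiv.mul_apply]
    nlinarith
  have htrans : ∀ g ∈ Hf, Hf.image (fun h => g * h) = Hf := by
    intro g hg
    apply Finset.eq_of_subset_of_card_le
    · intro x hx
      obtain ⟨h, hh, rfl⟩ := Finset.mem_image.mp hx
      exact hmul g hg h hh
    · rw [Finset.card_image_of_injective _ (mul_right_injective g)]
  set m := Hf.card with hm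
  have hmpos : 0 < m := Finset.card_pos.mpr ⟨1, hone⟩
  set Q : K := ∏ h ∈ Hf, h xK with hQdef
  have hgQ : ∀ g ∈ Hf, g Q = Q := by
    intro g hg
    rw [hQdef, map_prod]
    have h1 : ∏ h ∈ Hf, g (h xK) = ∏ h ∈ Hf, (g * h) xK :=
      Finset.prod_congr rfl fun h _ => (AlgEquiv.mul_apply g h xK).symm
    have h2 : ∏ h ∈ Hf, (g * h) xK = ∏ h ∈ Hf.image (fun h => g * h), h xK :=
      (Finset.prod_image (s := Hf) (f := fun h => h xK) (g := fun h => g * h)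
        (fun a _ b _ hab => mul_right_injective g hab)).symm
    rw [h1, h2, htrans g hg]
  have hcQ : starRingEnd ℂ ((Q : K) : ℂ) = ((Q : K) : ℂ) := by
    rw [← hc]
    exact congrArg (fun w : K => ((w : K) : ℂ)) (hgQ c hcHf)
  have habsQ : ‖((Q : K) : ℂ)‖ = lam ^ m := by
    have h1 : ((Q : K) : ℂ) = ∏ h ∈ Hf, ((h xK : K) : ℂ) := by
      rw [hQdef]; exact map_prod K.val _ _
    rw [h1, norm_prod,
      Finset.prod_congr rfl (fun h hh => (hmemHf h).mp hh), Finset.prod_const, hm]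
  have hQsq : ((Q : K) : ℂ) ^ 2 = ((lam : ℝ) : ℂ) ^ (2 * m) := by
    obtain ⟨r, hr⟩ := Complex.conj_eq_iff_real.mp hcQ
    rw [hr] at habsQ ⊢
    rw [Complex.norm_real, Real.norm_eq_abs] at habsQ
    have h5 : r ^ 2 = (lam ^ m) ^ 2 := by
      rw [← sq_abs r, habsQ]
    calc ((r : ℝ) : ℂ) ^ 2 = (((r ^ 2 : ℝ)) : ℂ) := by push_cast; ring
      _ = ((((lam ^ m) ^ 2 : ℝ)) : ℂ) := by rw [h5]
      _ = ((lam : ℝ) : ℂ) ^ (2 * m) := by push_cast; ring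
  have hQsqK : Q ^ 2 = xK ^ (2 * m) := by
    apply Subtype.coe_injective
    push_cast
    rw [hQsq]
  set k := 2 * m with hk
  have hkpos : 0 < k := by omega
  have hpow : ∀ g ∈ Hf, (g xK) ^ k = xK ^ k := by
    intro g hg
    have h1 := congrArg g hQsqK
    rw [map_pow, map_pow, hgQ g hg] at h1
    exact h1.symm.trans hQsqK
  have hpowC : ∀ g ∈ Hf, ((g xK : K) : ℂ) ^ k = ((lam : ℝ) : ℂ) ^ k := by
    intro g hg
    have h1 := Subtype.ext_iff.mp (hpow g hg)
    push_cast at h1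
    exact h1
  -- the conjugate power statement
  have hconjpow : ∀ z : ℂ, aeval z p = 0 → ‖z‖ = lam → z ^ k = ((lam : ℝ) : ℂ) ^ k := by
    intro z hz habsz
    have hzmem : z ∈ K := IntermediateField.subset_adjoin ℚ _ (by rw [mem_rootSet]; exact ⟨hp0, hz⟩)
    set zK : K := ⟨z, hzmem⟩ with hzKdef
    obtain ⟨g, hg⟩ := exists_algEquiv_apply_eq xK zK (by
      apply Subtype.coe_injective
      show ((aeval zK (minpoly ℚ xK) : K) : ℂ) = ((0 : K) : ℂ)
      rw [haevalK, hminxK, ZeroMemClass.coe_zero]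
      exact hz)
    have hgHf : g ∈ Hf := (hmemHf g).mpr (by rw [hg]; exact habsz)
    have := hpowC g hgHf
    rw [hg] at this
    exact this
  refine ⟨k, hkpos, fun z hz habsz => hconjpow z hz habsz, ?_⟩
  -- IsPerron (lam ^ k)
  refine ⟨pow_pos hpos k, hint.pow k, ?_⟩
  intro w hw hne
  have hintpow : IsIntegral ℚ (lam ^ k) := hintQ.pow k
  have hq0 : minpoly ℚ (lam ^ k) ≠ 0 := minpoly.ne_zero hintpow
  have hcoe : ((xK ^ k : K) : ℂ) = algebraMap ℝ ℂ (lam ^ k) := by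
    show _ = ((lam ^ k : ℝ) : ℂ)
    push_cast
    rfl
  have hminpowK : minpoly ℚ (xK ^ k) = minpoly ℚ (lam ^ k) := by
    rw [← minpoly.algebraMap_eq (algebraMap ℝ ℂ).injective (lam ^ k), ← hcoe]
    exact (minpoly.algebraMap_eq (algebraMap K ℂ).injective (xK ^ k)).symm
  have hsplit_q : ((minpoly ℚ (xK ^ k)).map (algebraMap ℚ K)).Splits :=
    Normal.splits inferInstance _
  have hwmem : w ∈ (minpoly ℚ (xK ^ k)).rootSet ℂ := by
    rw [hminpowK, mem_rootSet]
    exact ⟨hq0, hw⟩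
  rw [← Polynomial.Splits.image_rootSet hsplit_q K.val] at hwmem
  obtain ⟨wK, hwroot, hwK⟩ := hwmem
  have hwroot2 : aeval wK (minpoly ℚ (xK ^ k)) = 0 := (mem_rootSet.mp hwroot).2
  obtain ⟨g, hg⟩ := exists_algEquiv_apply_eq (xK ^ k) wK hwroot2
  rw [map_pow] at hg
  rcases lt_or_eq_of_le (habs g) with hlt | heq
  · -- strict case
    have : ‖w‖ = ‖((g xK : K) : ℂ)‖ ^ k := by
      rw [← hwK, ← hg]
      show ‖((((g xK) ^ k : K) : ℂ))‖ = _
      push_cast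
      rw [norm_pow]
    rw [this]
    exact pow_lt_pow_left₀ hlt (norm_nonneg _) hkpos.ne'
  · exfalso
    apply hne
    have hgHf : g ∈ Hf := (hmemHf g).mpr heq
    have h1 := hpow g hgHf
    rw [hg] at h1
    have h2 := Subtype.ext_iff.mp h1
    rw [← hwK]
    show ((wK : K) : ℂ) = _
    rw [h2, hcoe]
    rfl

lemma isWeakPerron_of_pow (lam : ℝ) (hpos : 0 < lam) (n : ℕ) (hn : 0 < n)
    (hP : IsPerron (lam ^ n)) : IsWeakPerron lam := by
  obtain ⟨hpos', hint', hconj'⟩ := hP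
  have hint : IsIntegral ℤ lam := by
    obtain ⟨Q, hQm, hQ0⟩ := hint'
    refine ⟨Q.comp (Polynomial.X ^ n), hQm.comp (Polynomial.monic_X_pow n)
      (by simpa using hn.ne'), ?_⟩
    show Polynomial.aeval lam (Q.comp (Polynomial.X ^ n)) = 0
    rw [Polynomial.aeval_comp]
    have h4 : Polynomial.aeval lam ((Polynomial.X : Polynomial ℤ) ^ n) = lam ^ n := by simp
    rw [h4]
    exact hQ0
  refine ⟨hpos, hint, ?_⟩
  intro z hz
  have hintQ : IsIntegral ℚ lam := hint.tower_top
  have h1 : Polynomial.aeval (lam : ℝ) ((minpoly ℚ (lam ^ n)).comp (Polynomial.X ^ n)) = 0 := by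
    rw [Polynomial.aeval_comp]
    have h4 : Polynomial.aeval lam ((Polynomial.X : Polynomial ℚ) ^ n) = lam ^ n := by simp
    rw [h4]
    exact minpoly.aeval ℚ (lam ^ n)
  have hdvd := minpoly.dvd ℚ lam h1
  have h2 : Polynomial.aeval z ((minpoly ℚ (lam ^ n)).comp (Polynomial.X ^ n)) = 0 := by
    obtain ⟨q, hq⟩ := hdvd
    rw [hq, map_mul, hz, zero_mul]
  rw [Polynomial.aeval_comp] at h2
  have h4 : Polynomial.aeval z ((Polynomial.X : Polynomial ℚ) ^ n) = z ^ n := by simp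
  rw [h4] at h2
  have h3 : ‖z ^ n‖ ≤ lam ^ n := by
    by_cases hzn : z ^ n = ((lam ^ n : ℝ) : ℂ)
    · rw [hzn, Complex.norm_real, Real.norm_eq_abs, abs_of_pos hpos']
    · exact le_of_lt (hconj' (z ^ n) h2 hzn)
  rw [norm_pow] at h3
  exact le_of_pow_le_pow_left₀ hn.ne' (le_of_lt hpos) h3

/-- A positive real number is a weak Perron number if and only if some positive integer
power of it is a Perron number; moreover every Galois conjugate of a weak Perron number
of maximal modulus is the number itself times a root of unity. -/
theorem weakPerron_iff_pow_perron (lam : ℝ) (hpos : 0 < lam) :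
    (IsWeakPerron lam ↔ ∃ n : ℕ, 0 < n ∧ IsPerron (lam ^ n)) ∧
    (IsWeakPerron lam → ∀ z : ℂ, IsGaloisConj lam z → ‖z‖ = lam →
      ∃ k : ℕ, 0 < k ∧ (z / (lam : ℂ)) ^ k = 1) := by
  constructor
  · constructor
    · intro hW
      obtain ⟨k, hk, _, hP⟩ := weakPerron_main lam hW
      exact ⟨k, hk, hP⟩
    · rintro ⟨n, hn, hP⟩
      exact isWeakPerron_of_pow lam hpos n hn hP
  · intro hW z hz habs
    obtain ⟨k, hk, hpow, _⟩ := weakPerron_main lam hW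
    refine ⟨k, hk, ?_⟩
    rw [div_pow, hpow z hz habs, div_self]
    exact pow_ne_zero k (by exact_mod_cast ne_of_gt hpos)
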